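/- For every real γ with 0 < γ < 1 and every natural number n ≥ 1, the partial sums S_n = ∑_{m=0}^{n} (−1)^m ψ(γ, m) = ∑_{m=0}^{n} C(1−γ, m) bracket their limit: if n is odd then S_n ≥ 2^{1−γ}, and if n is even then S_n ≤ 2^{1−γ}. -/

import Mathlib

open Finset Filter

/-- Generalized binomial coefficient `C(x, m) = x (x-1) ⋯ (x-m+1) / m!`. -/
noncomputable def genBinom (x : ℝ) (m : ℕ) : ℝ :=
  (descPochhammer ℝ m).eval x / m.factorial

/-- Memory function `ψ(γ, m) = (-1)^m ⬝ C(1-γ, m)`. -/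
noncomputable def psi (γ : ℝ) (m : ℕ) : ℝ :=
  (-1) ^ m * genBinom (1 - γ) m

open Set in
lemma iterDeriv_rpow_formula (α : ℝ) (m : ℕ) :
    ∀ x ∈ Icc (0:ℝ) 1, iteratedDerivWithin m (fun y : ℝ => (1 + y) ^ α) (Icc 0 1) x
      = (descPochhammer ℝ m).eval α * (1 + x) ^ (α - m) := by
  induction m with
  | zero => intro x hx; simp
  | succ m ih =>
    intro x hx
    have hu : UniqueDiffOn ℝ (Icc (0:ℝ) 1) := uniqueDiffOn_Icc one_pos
    rw [iteratedDerivWithin_succ]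
    have h1x : (0:ℝ) < 1 + x := by linarith [hx.1]
    have hd : HasDerivAt (fun y : ℝ => (descPochhammer ℝ m).eval α * (1 + y) ^ (α - m))
        ((descPochhammer ℝ m).eval α * ((α - m) * (1 + x) ^ (α - m - 1))) x := by
      have hbase : HasDerivAt (fun y : ℝ => 1 + y) 1 x :=
        (hasDerivAt_id x).const_add 1
      have hpow : HasDerivAt (fun y : ℝ => (1 + y) ^ (α - m))
          ((α - m) * (1 + x) ^ (α - m - 1) * 1) x :=
        (Real.hasDerivAt_rpow_const (Or.inl h1x.ne')).comp x hbase
      simpa [mul_comm, mul_left_comm, mul_assoc] using hpow.const_mul ((descPochhammer ℝ m).eval α)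
    have hdw : derivWithin (fun y : ℝ => (descPochhammer ℝ m).eval α * (1 + y) ^ (α - m))
        (Icc 0 1) x = (descPochhammer ℝ m).eval α * ((α - m) * (1 + x) ^ (α - m - 1)) :=
      hd.hasDerivWithinAt.derivWithin (hu x hx)
    rw [derivWithin_congr ih (ih x hx), hdw,
      show (descPochhammer ℝ (m+1)).eval α = (descPochhammer ℝ m).eval α * (α - m) from by
        simp [descPochhammer_succ_right]]
    push_cast
    rw [show α - ((m:ℝ) + 1) = α - m - 1 by ring]
    ring

open Set in
lemma descPochhammer_sign {α : ℝ} (hα0 : 0 < α) (hα1 : α < 1) (m : ℕ) (hm : 1 ≤ m) :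
    0 < (-1 : ℝ) ^ (m - 1) * (descPochhammer ℝ m).eval α := by
  induction m with
  | zero => omega
  | succ m ih =>
    rcases Nat.eq_or_lt_of_le hm with h | h
    · simp [← h]; simpa using hα0
    · have hm1 : 1 ≤ m := by omega
      have hpos := ih hm1
      have heval : (descPochhammer ℝ (m+1)).eval α = (descPochhammer ℝ m).eval α * (α - m) := by
        simp [descPochhammer_succ_right]
      have hneg : α - m < 0 := by
        have : (1:ℝ) ≤ m := by exact_mod_cast hm1
        linarith
      rw [heval, show m + 1 - 1 = m - 1 + 1 from by omega, pow_succ]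
      nlinarith [mul_pos hpos (show (0:ℝ) < -(α - m) by linarith)]

theorem partial_sums_bracket_limit (γ : ℝ) (hγ0 : 0 < γ) (hγ1 : γ < 1) (n : ℕ) (hn : 1 ≤ n) :
    (Odd n → (2 : ℝ) ^ (1 - γ) ≤ ∑ m ∈ Finset.range (n + 1), (-1 : ℝ) ^ m * psi γ m) ∧
    (Even n → ∑ m ∈ Finset.range (n + 1), (-1 : ℝ) ^ m * psi γ m ≤ (2 : ℝ) ^ (1 - γ)) := by
  set α := 1 - γ with hα
  have hα0 : 0 < α := by simp [hα]; linarith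
  have hα1 : α < 1 := by simp [hα]; linarith
  set f : ℝ → ℝ := fun y => (1 + y) ^ α with hf
  have hu : UniqueDiffOn ℝ (Set.Icc (0:ℝ) 1) := uniqueDiffOn_Icc one_pos
  -- smoothness
  have hcd : ContDiffOn ℝ n f (Set.Icc 0 1) := by
    intro x hx
    have h1x : (0:ℝ) < 1 + x := by linarith [hx.1]
    exact ((Real.contDiffAt_rpow_const_of_ne (p := α) (n := (n : ℕ∞)) h1x.ne').comp x
      (by fun_prop : ContDiffAt ℝ (n : ℕ∞) (fun y : ℝ => 1 + y) x)).contDiffWithinAt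
  have hdiff : DifferentiableOn ℝ (iteratedDerivWithin n f (Set.Icc 0 1)) (Set.Ioo 0 1) := by
    intro x hx
    have hx' : x ∈ Set.Icc (0:ℝ) 1 := Set.mem_Icc_of_Ioo hx
    have h1x : (0:ℝ) < 1 + x := by linarith [hx.1]
    have hd : HasDerivAt (fun y : ℝ => (descPochhammer ℝ n).eval α * (1 + y) ^ (α - n))
        ((descPochhammer ℝ n).eval α * ((α - n) * (1 + x) ^ (α - n - 1) * 1)) x :=
      ((Real.hasDerivAt_rpow_const (Or.inl h1x.ne')).comp x
        ((hasDerivAt_id x).const_add 1)).const_mul _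
    refine (hd.differentiableAt.differentiableWithinAt).congr ?_ ?_
    · intro y hy
      exact (iterDeriv_rpow_formula α n y (Set.mem_Icc_of_Ioo hy))
    · exact iterDeriv_rpow_formula α n x hx'
  obtain ⟨x', hx', hrem⟩ := taylor_mean_remainder_lagrange (f := f) (n := n) (x₀ := 0) (x := 1)
    (by norm_num) (by rw [Set.uIcc_of_le zero_le_one]; exact hcd)
    (by rw [Set.uIcc_of_le zero_le_one, Set.uIoo_of_le zero_le_one]; exact hdiff)
  rw [Set.uIoo_of_le zero_le_one] at hx'
  rw [Set.uIcc_of_le zero_le_one] at hrem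
  -- compute the Taylor polynomial value
  have htay : taylorWithinEval f n (Set.Icc 0 1) 0 1 = ∑ m ∈ Finset.range (n + 1), genBinom α m := by
    rw [taylor_within_apply]
    refine Finset.sum_congr rfl fun m hm => ?_
    rw [iterDeriv_rpow_formula α m 0 (by norm_num)]
    simp [genBinom, Real.one_rpow, div_eq_inv_mul]
  have hf1 : f 1 = (2:ℝ) ^ α := by norm_num [hf]
  -- the sum in the statement equals ∑ genBinom α m
  have hsum : ∑ m ∈ Finset.range (n + 1), (-1 : ℝ) ^ m * psi γ m
      = ∑ m ∈ Finset.range (n + 1), genBinom α m := by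
    refine Finset.sum_congr rfl fun m _ => ?_
    simp [psi, ← mul_assoc, ← mul_pow, hα]
  -- remainder formula
  have h1x' : (0:ℝ) < 1 + x' := by linarith [hx'.1]
  have hix : x' ∈ Set.Icc (0:ℝ) 1 := Set.mem_Icc_of_Ioo hx'
  rw [iterDeriv_rpow_formula α (n+1) x' hix, htay, hf1] at hrem
  have hpos : (0:ℝ) < (1 + x') ^ (α - (n+1:ℕ)) := Real.rpow_pos_of_pos h1x' _
  have hfac : (0:ℝ) < ((n+1).factorial : ℝ) := by positivity
  have hsign := descPochhammer_sign hα0 hα1 (n+1) (by omega)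
  rw [hsum, hα] at *
  constructor
  · intro hodd
    -- n odd : (-1)^(n+1-1) = (-1)^n = -1, so eval < 0, remainder < 0
    have hn1 : (-1:ℝ) ^ (n + 1 - 1) = -1 := by
      simp only [Nat.add_sub_cancel]; exact Odd.neg_one_pow hodd
    rw [hn1] at hsign
    have heval : (descPochhammer ℝ (n+1)).eval α < 0 := by linarith
    have : (2:ℝ) ^ α - ∑ m ∈ Finset.range (n + 1), genBinom α m ≤ 0 := by
      rw [hrem]
      have : (descPochhammer ℝ (n+1)).eval α * (1 + x') ^ (α - (n+1:ℕ)) ≤ 0 :=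
        mul_nonpos_of_nonpos_of_nonneg heval.le hpos.le
      have h2 : (1:ℝ) - 0 = 1 := by norm_num
      rw [h2, one_pow, mul_one]
      exact div_nonpos_of_nonpos_of_nonneg this hfac.le
    linarith
  · intro heven
    have hn1 : (-1:ℝ) ^ (n + 1 - 1) = 1 := by
      simp only [Nat.add_sub_cancel]; exact Even.neg_one_pow heven
    rw [hn1, one_mul] at hsign
    have : 0 ≤ (2:ℝ) ^ α - ∑ m ∈ Finset.range (n + 1), genBinom α m := by
      rw [hrem]
      have h2 : (1:ℝ) - 0 = 1 := by norm_num
      rw [h2, one_pow, mul_one]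
      positivity
    linarith
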